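/- Suppose s ≥ 2 and σ satisfies σ(B(x,r)) ≤ C·r^{n−αs} for all x ∈ ℝⁿ and r > 0, where C > 0. For R > 0 define b_R = R^{−n} ∫_{B(0,R)} ( ∫_0^1 (σ(B(x,r))/r^{n−αs})^{1/(s−1)} dr/r ) dx, the outer integral being with respect to Lebesgue measure. Then b_R → 0 as R → ∞. -/

import Mathlib

open MeasureTheory Metric Set Filter
open scoped ENNReal NNReal Topology

noncomputable section

/-- `n`-dimensional Euclidean space. -/
abbrev En (n : ℕ) : Type := EuclideanSpace ℝ (Fin n)

/-- The truncated Wolff potential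
`W^ρ_{α,s} μ (x) = ∫_0^ρ (μ(B(x,r))/r^{n-αs})^{1/(s-1)} dr/r`. -/
noncomputable def wolffT (n : ℕ) (α s : ℝ) (μ : Measure (En n)) (ρ : ℝ) (x : En n) : ℝ≥0∞ :=
  ∫⁻ r in Set.Ioo (0:ℝ) ρ,
    (μ (Metric.ball x r) / ENNReal.ofReal (r ^ ((n:ℝ) - α * s))) ^ (1/(s-1))
      * ENNReal.ofReal r⁻¹

/-- The (full) Wolff potential
`W_{α,s} μ (x) = ∫_0^∞ (μ(B(x,r))/r^{n-αs})^{1/(s-1)} dr/r`. -/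
noncomputable def wolff (n : ℕ) (α s : ℝ) (μ : Measure (En n)) (x : En n) : ℝ≥0∞ :=
  ∫⁻ r in Set.Ioi (0:ℝ),
    (μ (Metric.ball x r) / ENNReal.ofReal (r ^ ((n:ℝ) - α * s))) ^ (1/(s-1))
      * ENNReal.ofReal r⁻¹

/-- The truncated Riesz-type potential
`I^ρ μ (x) = ∫_0^ρ (μ(B(x,r))/r^{n-αs}) dr/r`. -/
noncomputable def rieszT (n : ℕ) (α s : ℝ) (μ : Measure (En n)) (ρ : ℝ) (x : En n) : ℝ≥0∞ :=
  ∫⁻ r in Set.Ioo (0:ℝ) ρ,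
    (μ (Metric.ball x r) / ENNReal.ofReal (r ^ ((n:ℝ) - α * s))) * ENNReal.ofReal r⁻¹

/-- The nonlinear operator `𝒩 f (x) = W_{α,s}(f^{s-1} dσ)(x)`. -/
noncomputable def Nop (n : ℕ) (α s : ℝ) (σ : Measure (En n)) (f : En n → ℝ≥0∞) (x : En n) :
    ℝ≥0∞ :=
  ∫⁻ r in Set.Ioi (0:ℝ),
    (ENNReal.ofReal (r ^ (α * s - (n:ℝ))) * ∫⁻ y in Metric.ball x r, (f y) ^ (s-1) ∂σ)
        ^ (1/(s-1))
      * ENNReal.ofReal r⁻¹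

/-- The Riesz potential `I_α f (x) = (n-α)⁻¹ ∫ f(y) |x-y|^{α-n} dy`. -/
noncomputable def rieszPot (n : ℕ) (α : ℝ) (f : En n → ℝ≥0∞) (x : En n) : ℝ≥0∞ :=
  ENNReal.ofReal (((n:ℝ) - α)⁻¹) * ∫⁻ y, f y * ENNReal.ofReal (‖x - y‖ ^ (α - (n:ℝ)))

/-- The Riesz capacity `cap_{α,s}(A) = inf { ∫ f^s : f ≥ 0, I_α f ≥ 1 on A }`. -/
noncomputable def rieszCap (n : ℕ) (α s : ℝ) (A : Set (En n)) : ℝ≥0∞ :=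
  ⨅ (f : En n → ℝ≥0∞) (_ : Measurable f) (_ : ∀ x ∈ A, 1 ≤ rieszPot n α f x),
    ∫⁻ y, (f y) ^ s

/-- Extended exponential: `eexp x = exp x` for finite `x`, with `eexp ∞ = ∞`. -/
noncomputable def eexp (x : ℝ≥0∞) : ℝ≥0∞ :=
  if x = ∞ then ∞ else ENNReal.ofReal (Real.exp x.toReal)

set_option linter.unusedVariables false

lemma aux_young {a ε : ℝ≥0∞} {θ : ℝ} (hθ0 : 0 < θ) (hθ1 : θ ≤ 1) (hε0 : ε ≠ 0) (hεt : ε ≠ ∞) :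
    a ^ θ ≤ ε ^ θ + a * ε ^ (θ - 1) := by
  rcases eq_or_ne a ∞ with rfl | hat
  · have h1 : ε ^ (θ - 1) ≠ 0 := by
      simp only [ne_eq, ENNReal.rpow_eq_zero_iff, not_or]
      exact ⟨fun h => absurd h.1 hε0, fun h => absurd h.1 hεt⟩
    rw [ENNReal.top_mul h1]
    simp
  rcases eq_or_ne a 0 with rfl | ha0
  · simp [ENNReal.zero_rpow_of_pos hθ0]
  rcases le_total a ε with h | h
  · exact le_trans (ENNReal.rpow_le_rpow h hθ0.le) le_self_add
  · refine le_trans ?_ le_add_self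
    have h2 : a ^ θ = a * a ^ (θ - 1) := by
      have : θ = 1 + (θ - 1) := by ring
      rw [this, ENNReal.rpow_add _ _ ha0 hat, ENNReal.rpow_one]
      ring_nf
    rw [h2]
    refine mul_le_mul_right ?_ a
    rw [show θ - 1 = -(1 - θ) by ring, ENNReal.rpow_neg, ENNReal.rpow_neg,
      ENNReal.inv_le_inv]
    exact ENNReal.rpow_le_rpow h (by linarith)

lemma aux_measBall {n : ℕ} (σ : Measure (EuclideanSpace ℝ (Fin n))) [SFinite σ] :
    Measurable (fun p : EuclideanSpace ℝ (Fin n) × ℝ => σ (ball p.1 p.2)) := by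
  have hset : MeasurableSet {q : (EuclideanSpace ℝ (Fin n) × ℝ) × EuclideanSpace ℝ (Fin n) |
      dist q.2 q.1.1 < q.1.2} := by
    apply IsOpen.measurableSet
    apply isOpen_lt
    · exact continuous_dist.comp (continuous_snd.prodMk (continuous_fst.comp continuous_fst))
    · exact continuous_snd.comp continuous_fst
  have h := measurable_measure_prodMk_left (ν := σ) hset
  have heq : ∀ p : EuclideanSpace ℝ (Fin n) × ℝ,
      ball p.1 p.2 = Prod.mk p ⁻¹' {q : (EuclideanSpace ℝ (Fin n) × ℝ) × EuclideanSpace ℝ (Fin n) |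
        dist q.2 q.1.1 < q.1.2} := by
    intro p; ext y; simp [Metric.mem_ball]
  simp_rw [heq]
  exact h

lemma aux_lint_ball {n : ℕ} (σ : Measure (EuclideanSpace ℝ (Fin n))) [SFinite σ] (r : ℝ) :
    ∫⁻ x, σ (ball x r) ∂(volume : Measure (EuclideanSpace ℝ (Fin n)))
      = volume (ball (0 : EuclideanSpace ℝ (Fin n)) r) * σ univ := by
  set F : EuclideanSpace ℝ (Fin n) × EuclideanSpace ℝ (Fin n) → ℝ≥0∞ :=
    {q : EuclideanSpace ℝ (Fin n) × EuclideanSpace ℝ (Fin n) | dist q.2 q.1 < r}.indicator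
      (fun _ => 1) with hFdef
  have hset : MeasurableSet {q : EuclideanSpace ℝ (Fin n) × EuclideanSpace ℝ (Fin n) |
      dist q.2 q.1 < r} :=
    (isOpen_lt (continuous_dist.comp (continuous_snd.prodMk continuous_fst))
      continuous_const).measurableSet
  have hF : Measurable F := measurable_const.indicator hset
  calc ∫⁻ x, σ (ball x r) ∂(volume : Measure (EuclideanSpace ℝ (Fin n)))
      = ∫⁻ x, ∫⁻ y, F (x, y) ∂σ ∂(volume : Measure (EuclideanSpace ℝ (Fin n))) := by
        apply lintegral_congr; intro x
        rw [← lintegral_indicator_one (measurableSet_ball (x := x) (ε := r))]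
        apply lintegral_congr; intro y
        by_cases hy : dist y x < r <;> simp [hFdef, Set.indicator_apply, Metric.mem_ball, hy]
    _ = ∫⁻ y, ∫⁻ x, F (x, y) ∂(volume : Measure (EuclideanSpace ℝ (Fin n))) ∂σ :=
        lintegral_lintegral_swap hF.aemeasurable
    _ = ∫⁻ _, volume (ball (0 : EuclideanSpace ℝ (Fin n)) r) ∂σ := by
        apply lintegral_congr; intro y
        rw [← Measure.addHaar_ball_center volume y,
          ← lintegral_indicator_one (measurableSet_ball (x := y) (ε := r))]
        apply lintegral_congr; intro x
        by_cases hy : dist y x < r <;> simp [hFdef, Set.indicator_apply, Metric.mem_ball, dist_comm, hy]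
    _ = volume (ball (0 : EuclideanSpace ℝ (Fin n)) r) * σ univ := lintegral_const _

lemma aux_J_lt_top {q : ℝ} (hq : 0 < q) :
    ∫⁻ r in Ioo (0:ℝ) 1, ENNReal.ofReal (r ^ (q - 1)) < ∞ := by
  have hint : IntegrableOn (fun r : ℝ => r ^ (q - 1)) (Ioo 0 1) :=
    (intervalIntegral.integrableOn_Ioo_rpow_iff one_pos).mpr (by linarith)
  exact hint.lintegral_lt_top

lemma aux_ballbound (σ : Measure (En n)) [SFinite σ] (hn : 2 ≤ n) {R r : ℝ} (hR : 1 ≤ R)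
    (hr0 : 0 < r) (hr1 : r < 1) :
    ∫⁻ x in ball (0 : En n) R, σ (ball x r) ∂volume
      ≤ ENNReal.ofReal (r ^ (n:ℝ)) * volume (ball (0 : En n) 1) * σ (ball (0 : En n) (R+1)) := by
  haveI : Nonempty (Fin n) := ⟨⟨0, by omega⟩⟩
  set σ' := σ.restrict (ball (0 : En n) (R+1)) with hσ'
  have hsub : ∀ x ∈ ball (0 : En n) R, σ (ball x r) = σ' (ball x r) := by
    intro x hx
    rw [hσ', Measure.restrict_apply measurableSet_ball, inter_eq_left.mpr]
    intro y hy
    have h1 : dist y (0 : En n) ≤ dist y x + dist x 0 := dist_triangle _ _ _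
    have h2 : dist y x < r := mem_ball.mp hy
    have h3 : dist x (0 : En n) < R := mem_ball.mp hx
    exact mem_ball.mpr (by linarith)
  calc ∫⁻ x in ball (0 : En n) R, σ (ball x r) ∂volume
      = ∫⁻ x in ball (0 : En n) R, σ' (ball x r) ∂volume :=
        setLIntegral_congr_fun measurableSet_ball hsub
    _ ≤ ∫⁻ x, σ' (ball x r) ∂volume := setLIntegral_le_lintegral _ _
    _ = volume (ball (0 : En n) r) * σ' univ := aux_lint_ball σ' r
    _ = ENNReal.ofReal (r ^ (n:ℝ)) * volume (ball (0 : En n) 1) * σ (ball (0 : En n) (R+1)) := by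
        rw [Measure.restrict_apply_univ, Measure.addHaar_ball volume (0 : En n) hr0.le,
          finrank_euclideanSpace_fin, ← Real.rpow_natCast r n]

lemma aux_main {n : ℕ} (hn : 2 ≤ n) (p θ C : ℝ) (hp0 : 0 < p) (hpn : p < (n:ℝ))
    (hθ0 : 0 < θ) (hθ1 : θ ≤ 1) (hC : 0 < C)
    (σ : Measure (En n)) [SFinite σ]
    (hball : ∀ (x : En n) (r : ℝ), 0 < r →
      σ (Metric.ball x r) ≤ ENNReal.ofReal (C * r ^ ((n:ℝ) - p)))
    (R : ℝ) (hR : 1 ≤ R) :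
    (∫⁻ x in ball (0 : En n) R, (∫⁻ r in Ioo (0:ℝ) 1,
        (σ (ball x r) / ENNReal.ofReal (r ^ ((n:ℝ) - p))) ^ θ
          * ENNReal.ofReal r⁻¹) ∂volume)
      ≤ ((∫⁻ r in Ioo (0:ℝ) 1, ENNReal.ofReal (r ^ (p*θ - 1)))
          * volume (ball (0 : En n) 1) * (1 + ENNReal.ofReal (C * 2 ^ ((n:ℝ) - p))))
        * ENNReal.ofReal (R ^ ((n:ℝ) - p*θ)) := by
  haveI : Nonempty (Fin n) := ⟨⟨0, by omega⟩⟩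
  have hR0 : (0:ℝ) < R := lt_of_lt_of_le one_pos hR
  set J : ℝ≥0∞ := ∫⁻ r in Ioo (0:ℝ) 1, ENNReal.ofReal (r ^ (p*θ - 1)) with hJdef
  set v₁ : ℝ≥0∞ := volume (ball (0 : En n) 1) with hv₁def
  have hv_lt : v₁ ≠ ∞ := measure_ball_lt_top.ne
  -- the two comparison functions
  set u : ℝ → ℝ≥0∞ := fun r => ENNReal.ofReal (R ^ (-(p*θ)) * r ^ (p*θ - 1)) with hudef
  set w : ℝ → ℝ≥0∞ := fun r => ENNReal.ofReal (R ^ (p*(1-θ)) * r ^ (p*θ - 1 - (n:ℝ))) with hwdef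
  -- pointwise Young-type bound
  have point : ∀ (x : En n), ∀ r ∈ Ioo (0:ℝ) 1,
      (σ (ball x r) / ENNReal.ofReal (r ^ ((n:ℝ) - p))) ^ θ * ENNReal.ofReal r⁻¹
        ≤ u r + σ (ball x r) * w r := by
    intro x r hr
    obtain ⟨hr0, hr1⟩ := hr
    set a : ℝ≥0∞ := σ (ball x r) / ENNReal.ofReal (r ^ ((n:ℝ) - p)) with hadef
    set ε : ℝ≥0∞ := ENNReal.ofReal (R ^ (-p) * r ^ p) with hεdef
    have hε0 : ε ≠ 0 := by
      rw [hεdef]; simp only [ne_eq, ENNReal.ofReal_eq_zero, not_le]; positivity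
    have hεt : ε ≠ ∞ := ENNReal.ofReal_ne_top
    have hy := aux_young (a := a) hθ0 hθ1 hε0 hεt
    have e1 : ε ^ θ * ENNReal.ofReal r⁻¹ = u r := by
      rw [hεdef, hudef, ENNReal.ofReal_rpow_of_pos (by positivity),
        ← ENNReal.ofReal_mul (by positivity)]
      congr 1
      rw [← Real.rpow_neg_one r, Real.mul_rpow (by positivity) (by positivity),
        ← Real.rpow_mul hR0.le, ← Real.rpow_mul hr0.le, mul_assoc, ← Real.rpow_add hr0,
        show (-p)*θ = -(p*θ) by ring, show p*θ + (-1) = p*θ - 1 by ring]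
    have e2 : a * ε ^ (θ - 1) * ENNReal.ofReal r⁻¹ = σ (ball x r) * w r := by
      rw [hadef, hεdef, hwdef, div_eq_mul_inv,
        ← ENNReal.ofReal_inv_of_pos (by positivity : (0:ℝ) < r ^ ((n:ℝ) - p)),
        ENNReal.ofReal_rpow_of_pos (by positivity)]
      rw [mul_assoc, mul_assoc, ← ENNReal.ofReal_mul (by positivity),
        ← ENNReal.ofReal_mul (by positivity)]
      congr 1
      rw [← Real.rpow_neg hr0.le, ← Real.rpow_neg_one r,
        Real.mul_rpow (by positivity) (by positivity),
        ← Real.rpow_mul hR0.le, ← Real.rpow_mul hr0.le]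
      rw [show r ^ (-((n:ℝ) - p)) * (R ^ ((-p)*(θ-1)) * r ^ (p*(θ-1)) * r ^ (-1:ℝ))
          = R ^ ((-p)*(θ-1)) * (r ^ (-((n:ℝ) - p)) * r ^ (p*(θ-1)) * r ^ (-1:ℝ)) by ring,
        ← Real.rpow_add hr0, ← Real.rpow_add hr0,
        show (-p)*(θ-1) = p*(1-θ) by ring,
        show -((n:ℝ) - p) + p*(θ-1) + (-1) = p*θ - 1 - (n:ℝ) by ring]
    calc a ^ θ * ENNReal.ofReal r⁻¹
        ≤ (ε ^ θ + a * ε ^ (θ - 1)) * ENNReal.ofReal r⁻¹ := mul_le_mul_left hy _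
      _ = ε ^ θ * ENNReal.ofReal r⁻¹ + a * ε ^ (θ - 1) * ENNReal.ofReal r⁻¹ := by ring
      _ = u r + σ (ball x r) * w r := by rw [e1, e2]
  -- measurability of w
  have hwmeas : Measurable w := by
    rw [hwdef]; fun_prop
  have humeas : Measurable u := by
    rw [hudef]; fun_prop
  -- step 1: bound the inner integral
  have step1 : ∀ x : En n,
      (∫⁻ r in Ioo (0:ℝ) 1,
        (σ (ball x r) / ENNReal.ofReal (r ^ ((n:ℝ) - p))) ^ θ * ENNReal.ofReal r⁻¹)
      ≤ (∫⁻ r in Ioo (0:ℝ) 1, u r) + ∫⁻ r in Ioo (0:ℝ) 1, σ (ball x r) * w r := by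
    intro x
    rw [← lintegral_add_left humeas]
    apply lintegral_mono_ae
    filter_upwards [ae_restrict_mem measurableSet_Ioo] with r hr
    exact point x r hr
  -- value of the first integral
  have hu_int : (∫⁻ r in Ioo (0:ℝ) 1, u r) = ENNReal.ofReal (R ^ (-(p*θ))) * J := by
    rw [hudef, hJdef]
    rw [← lintegral_const_mul' _ _ ENNReal.ofReal_ne_top]
    apply setLIntegral_congr_fun measurableSet_Ioo
    intro r hr
    beta_reduce
    rw [ENNReal.ofReal_mul (by positivity)]
  -- swap the order of integration
  have swap : (∫⁻ x in ball (0 : En n) R, ∫⁻ r in Ioo (0:ℝ) 1, σ (ball x r) * w r ∂volume)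
      = ∫⁻ r in Ioo (0:ℝ) 1, ∫⁻ x in ball (0 : En n) R, σ (ball x r) * w r ∂volume := by
    apply lintegral_lintegral_swap
    apply Measurable.aemeasurable
    exact (aux_measBall σ).mul (hwmeas.comp measurable_snd)
  set σB : ℝ≥0∞ := σ (ball (0 : En n) (R+1)) with hσBdef
  have hσB : σB ≤ ENNReal.ofReal (C * (R+1) ^ ((n:ℝ) - p)) := hball (0 : En n) (R+1) (by linarith)
  have hσBt : σB ≠ ∞ := (lt_of_le_of_lt hσB ENNReal.ofReal_lt_top).ne
  have step2 : (∫⁻ r in Ioo (0:ℝ) 1, ∫⁻ x in ball (0 : En n) R, σ (ball x r) * w r ∂volume)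
      ≤ ∫⁻ r in Ioo (0:ℝ) 1, (ENNReal.ofReal (r ^ (n:ℝ)) * v₁ * σB) * w r := by
    apply lintegral_mono_ae
    filter_upwards [ae_restrict_mem measurableSet_Ioo] with r hr
    rw [lintegral_mul_const' _ _ (by simp [hwdef] : w r ≠ ∞)]
    exact mul_le_mul_left (aux_ballbound σ hn hR hr.1 hr.2) _
  have step3 : (∫⁻ r in Ioo (0:ℝ) 1, (ENNReal.ofReal (r ^ (n:ℝ)) * v₁ * σB) * w r)
      = v₁ * σB * ENNReal.ofReal (R ^ (p*(1-θ))) * J := by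
    have hptwise : ∀ r ∈ Ioo (0:ℝ) 1, (ENNReal.ofReal (r ^ (n:ℝ)) * v₁ * σB) * w r
        = (v₁ * σB * ENNReal.ofReal (R ^ (p*(1-θ)))) * ENNReal.ofReal (r ^ (p*θ - 1)) := by
      intro r hr
      rw [hwdef]
      simp only []
      rw [ENNReal.ofReal_mul (Real.rpow_nonneg (by linarith) _)]
      have hcomb : ENNReal.ofReal (r ^ (n:ℝ)) * ENNReal.ofReal (r ^ (p*θ - 1 - (n:ℝ)))
          = ENNReal.ofReal (r ^ (p*θ - 1)) := by
        rw [← ENNReal.ofReal_mul (Real.rpow_nonneg hr.1.le _), ← Real.rpow_add hr.1,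
          show (n:ℝ) + (p*θ - 1 - (n:ℝ)) = p*θ - 1 by ring]
      calc (ENNReal.ofReal (r ^ (n:ℝ)) * v₁ * σB)
            * (ENNReal.ofReal (R ^ (p*(1-θ))) * ENNReal.ofReal (r ^ (p*θ - 1 - (n:ℝ))))
          = (v₁ * σB * ENNReal.ofReal (R ^ (p*(1-θ))))
            * (ENNReal.ofReal (r ^ (n:ℝ)) * ENNReal.ofReal (r ^ (p*θ - 1 - (n:ℝ)))) := by ring
        _ = (v₁ * σB * ENNReal.ofReal (R ^ (p*(1-θ)))) * ENNReal.ofReal (r ^ (p*θ - 1)) := by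
            rw [hcomb]
    rw [setLIntegral_congr_fun measurableSet_Ioo hptwise,
      lintegral_const_mul' _ _
        (ENNReal.mul_ne_top (ENNReal.mul_ne_top hv_lt hσBt) ENNReal.ofReal_ne_top),
      hJdef, mul_assoc]
  -- the volume of the big ball
  have hvol : volume (ball (0 : En n) R) = ENNReal.ofReal (R ^ (n:ℝ)) * v₁ := by
    rw [hv₁def, Measure.addHaar_ball volume _ hR0.le, finrank_euclideanSpace_fin,
      ← Real.rpow_natCast R n]
  -- real-number comparison for the second term
  have hreal : C * (R+1) ^ ((n:ℝ)-p) * R ^ (p*(1-θ)) ≤ (C * 2 ^ ((n:ℝ)-p)) * R ^ ((n:ℝ)-p*θ) := by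
    have h1 : (R+1) ^ ((n:ℝ)-p) ≤ (2*R) ^ ((n:ℝ)-p) :=
      Real.rpow_le_rpow (by linarith) (by linarith) (by linarith)
    have h2 : (2*R) ^ ((n:ℝ)-p) = 2 ^ ((n:ℝ)-p) * R ^ ((n:ℝ)-p) :=
      Real.mul_rpow (by norm_num) hR0.le
    have h3 : R ^ ((n:ℝ)-p) * R ^ (p*(1-θ)) = R ^ ((n:ℝ)-p*θ) := by
      rw [← Real.rpow_add hR0, show (n:ℝ)-p + p*(1-θ) = (n:ℝ)-p*θ by ring]
    calc C * (R+1) ^ ((n:ℝ)-p) * R ^ (p*(1-θ))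
        ≤ C * (2 ^ ((n:ℝ)-p) * R ^ ((n:ℝ)-p)) * R ^ (p*(1-θ)) := by
          apply mul_le_mul_of_nonneg_right _ (by positivity)
          exact mul_le_mul_of_nonneg_left (h1.trans_eq h2) hC.le
      _ = (C * 2 ^ ((n:ℝ)-p)) * (R ^ ((n:ℝ)-p) * R ^ (p*(1-θ))) := by ring
      _ = (C * 2 ^ ((n:ℝ)-p)) * R ^ ((n:ℝ)-p*θ) := by rw [h3]
  have hRcomb : ENNReal.ofReal (R ^ (-(p*θ))) * ENNReal.ofReal (R ^ (n:ℝ))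
      = ENNReal.ofReal (R ^ ((n:ℝ)-p*θ)) := by
    rw [← ENNReal.ofReal_mul (by positivity), ← Real.rpow_add hR0,
      show -(p*θ) + (n:ℝ) = (n:ℝ)-p*θ by ring]
  -- put everything together
  calc (∫⁻ x in ball (0 : En n) R, (∫⁻ r in Ioo (0:ℝ) 1,
        (σ (ball x r) / ENNReal.ofReal (r ^ ((n:ℝ) - p))) ^ θ
          * ENNReal.ofReal r⁻¹) ∂volume)
      ≤ ∫⁻ x in ball (0 : En n) R, ((∫⁻ r in Ioo (0:ℝ) 1, u r)
          + ∫⁻ r in Ioo (0:ℝ) 1, σ (ball x r) * w r) ∂volume := lintegral_mono step1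
    _ = (∫⁻ r in Ioo (0:ℝ) 1, u r) * volume (ball (0 : En n) R)
          + ∫⁻ x in ball (0 : En n) R, (∫⁻ r in Ioo (0:ℝ) 1, σ (ball x r) * w r) ∂volume := by
        rw [lintegral_add_left measurable_const, setLIntegral_const]
    _ ≤ (ENNReal.ofReal (R ^ (-(p*θ))) * J) * (ENNReal.ofReal (R ^ (n:ℝ)) * v₁)
          + v₁ * σB * ENNReal.ofReal (R ^ (p*(1-θ))) * J := by
        apply add_le_add
        · rw [hu_int, hvol]
        · rw [swap, ← step3]; exact step2
    _ ≤ J * v₁ * ENNReal.ofReal (R ^ ((n:ℝ)-p*θ))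
          + v₁ * (ENNReal.ofReal (C * 2 ^ ((n:ℝ)-p)) * ENNReal.ofReal (R ^ ((n:ℝ)-p*θ))) * J := by
        apply add_le_add
        · rw [show (ENNReal.ofReal (R ^ (-(p*θ))) * J) * (ENNReal.ofReal (R ^ (n:ℝ)) * v₁)
              = J * v₁ * (ENNReal.ofReal (R ^ (-(p*θ))) * ENNReal.ofReal (R ^ (n:ℝ))) by ring,
            hRcomb]
        · rw [mul_assoc v₁]
          refine mul_le_mul_left (mul_le_mul_right ?_ _) _
          calc σB * ENNReal.ofReal (R ^ (p*(1-θ)))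
              ≤ ENNReal.ofReal (C * (R+1) ^ ((n:ℝ)-p)) * ENNReal.ofReal (R ^ (p*(1-θ))) :=
                mul_le_mul_left hσB _
            _ = ENNReal.ofReal (C * (R+1) ^ ((n:ℝ)-p) * R ^ (p*(1-θ))) := by
                rw [← ENNReal.ofReal_mul (by positivity)]
            _ ≤ ENNReal.ofReal ((C * 2 ^ ((n:ℝ)-p)) * R ^ ((n:ℝ)-p*θ)) :=
                ENNReal.ofReal_le_ofReal hreal
            _ = ENNReal.ofReal (C * 2 ^ ((n:ℝ)-p)) * ENNReal.ofReal (R ^ ((n:ℝ)-p*θ)) := by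
                rw [← ENNReal.ofReal_mul (by positivity)]
    _ = (J * v₁ * (1 + ENNReal.ofReal (C * 2 ^ ((n:ℝ) - p))))
          * ENNReal.ofReal (R ^ ((n:ℝ) - p*θ)) := by ring

/-- if `s ≥ 2` and `σ(B(x,r)) ≤ C r^{n-αs}` for all balls, then
`b_R = R^{-n} ∫_{B(0,R)} (∫_0^1 (σ(B(x,r))/r^{n-αs})^{1/(s-1)} dr/r) dx → 0` as `R → ∞`. -/
theorem statement19 (n : ℕ) (hn : 2 ≤ n) (α s : ℝ) (hs : 1 < s) (hs2 : 2 ≤ s) (hα : 0 < α)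
    (hαs : α * s < n) (C : ℝ) (hC : 0 < C)
    (σ : Measure (En n)) [IsLocallyFiniteMeasure σ]
    (hball : ∀ (x : En n) (r : ℝ), 0 < r →
      σ (Metric.ball x r) ≤ ENNReal.ofReal (C * r ^ ((n:ℝ) - α * s))) :
    Filter.Tendsto
      (fun R : ℝ =>
        (∫⁻ x in Metric.ball (0 : En n) R, wolffT n α s σ 1 x ∂volume)
          / ENNReal.ofReal (R ^ (n:ℝ)))
      Filter.atTop (nhds 0) := by
  simp only [wolffT]
  haveI : Nonempty (Fin n) := ⟨⟨0, by omega⟩⟩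
  have hs1 : (0:ℝ) < s - 1 := by linarith
  set θ : ℝ := 1/(s-1) with hθdef
  have hθ0 : 0 < θ := by positivity
  have hθ1 : θ ≤ 1 := by rw [hθdef, div_le_one hs1]; linarith
  set p : ℝ := α * s with hpdef
  have hp0 : 0 < p := mul_pos hα (by linarith)
  have hpn : p < n := hαs
  have hpt : 0 < p * θ := mul_pos hp0 hθ0
  set v₁ : ℝ≥0∞ := volume (ball (0 : En n) 1) with hv₁def
  have hv_lt : v₁ ≠ ∞ := measure_ball_lt_top.ne
  set J : ℝ≥0∞ := ∫⁻ r in Ioo (0:ℝ) 1, ENNReal.ofReal (r ^ (p*θ - 1)) with hJdef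
  have hJ_lt : J ≠ ∞ := (aux_J_lt_top hpt).ne
  set K : ℝ≥0∞ := J * v₁ * (1 + ENNReal.ofReal (C * 2 ^ ((n:ℝ) - p))) with hKdef
  have hK_ne : K ≠ ∞ := by
    apply ENNReal.mul_ne_top (ENNReal.mul_ne_top hJ_lt hv_lt)
    exact ENNReal.add_ne_top.mpr ⟨ENNReal.one_ne_top, ENNReal.ofReal_ne_top⟩
  have main : ∀ R : ℝ, 1 ≤ R →
      (∫⁻ x in ball (0 : En n) R, (∫⁻ r in Ioo (0:ℝ) 1,
          (σ (ball x r) / ENNReal.ofReal (r ^ ((n:ℝ) - p))) ^ θ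
            * ENNReal.ofReal r⁻¹) ∂volume)
          / ENNReal.ofReal (R ^ (n:ℝ)) ≤ K * ENNReal.ofReal (R ^ (-(p*θ))) := by
    intro R hR
    have hR0 : (0:ℝ) < R := lt_of_lt_of_le one_pos hR
    have key := aux_main hn p θ C hp0 hpn hθ0 hθ1 hC σ hball R hR
    have hdiv : (K * ENNReal.ofReal (R ^ ((n:ℝ) - p*θ))) / ENNReal.ofReal (R ^ (n:ℝ))
        = K * ENNReal.ofReal (R ^ (-(p*θ))) := by
      rw [show (n:ℝ) - p*θ = -(p*θ) + (n:ℝ) by ring, Real.rpow_add hR0,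
        ENNReal.ofReal_mul (Real.rpow_nonneg hR0.le _), ← mul_assoc, mul_div_assoc,
        ENNReal.div_self (by simp only [ne_eq, ENNReal.ofReal_eq_zero, not_le]; positivity)
          ENNReal.ofReal_ne_top, mul_one]
    calc (∫⁻ x in ball (0 : En n) R, (∫⁻ r in Ioo (0:ℝ) 1,
          (σ (ball x r) / ENNReal.ofReal (r ^ ((n:ℝ) - p))) ^ θ
            * ENNReal.ofReal r⁻¹) ∂volume) / ENNReal.ofReal (R ^ (n:ℝ))
        ≤ (K * ENNReal.ofReal (R ^ ((n:ℝ) - p*θ))) / ENNReal.ofReal (R ^ (n:ℝ)) :=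
          ENNReal.div_le_div_right key _
      _ = K * ENNReal.ofReal (R ^ (-(p*θ))) := hdiv
  have hlim : Tendsto (fun R : ℝ => K * ENNReal.ofReal (R ^ (-(p*θ)))) atTop (nhds 0) := by
    have h1 : Tendsto (fun R : ℝ => ENNReal.ofReal (R ^ (-(p*θ)))) atTop (nhds 0) := by
      rw [show (0:ℝ≥0∞) = ENNReal.ofReal 0 by simp]
      exact (ENNReal.continuous_ofReal.tendsto 0).comp (tendsto_rpow_neg_atTop hpt)
    have h2 := ENNReal.Tendsto.const_mul h1 (Or.inr hK_ne)
    simpa using h2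
  refine tendsto_of_tendsto_of_tendsto_of_le_of_le' tendsto_const_nhds hlim
    (Eventually.of_forall fun R => zero_le) ?_
  filter_upwards [eventually_ge_atTop (1:ℝ)] with R hR
  exact main R hR

end
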